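/- Let f ∈ k[x,y,z] be homogeneous of degree d, char k = 0, δ = det(Hessian f), H_yz = f_z∂_y − f_y∂_z. Then (d-1)·(f_x·H_yz(Δ_xx) + f_y·H_yz(Δ_xy) + f_z·H_yz(Δ_xz)) = x·(f_z·∂_y δ − f_y·∂_z δ), where Δ_xx, Δ_xy, Δ_xz are the first-row cofactors of the Hessian of f. -/

import Mathlib

open MvPolynomial

noncomputable def dX {k : Type*} [CommSemiring k] (f : MvPolynomial (Fin 3) k) :
    MvPolynomial (Fin 3) k := pderiv 0 f
noncomputable def dY {k : Type*} [CommSemiring k] (f : MvPolynomial (Fin 3) k) :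
    MvPolynomial (Fin 3) k := pderiv 1 f
noncomputable def dZ {k : Type*} [CommSemiring k] (f : MvPolynomial (Fin 3) k) :
    MvPolynomial (Fin 3) k := pderiv 2 f

lemma X_mul_pderiv_monomial {k σ : Type*} [CommSemiring k] [DecidableEq σ] (i : σ)
    (s : σ →₀ ℕ) (a : k) :
    X i * pderiv i (monomial s a) = monomial s (a * s i) := by
  rw [pderiv_monomial]
  by_cases h : s i = 0
  · simp [h]
  · rw [X, monomial_mul, one_mul]
    congr 2
    rw [add_comm]
    exact tsub_add_cancel_of_le (Finsupp.single_le_iff.mpr (Nat.one_le_iff_ne_zero.mpr h))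

lemma my_pderiv_comm {k σ : Type*} [CommSemiring k] [DecidableEq σ] (i j : σ)
    (f : MvPolynomial σ k) : pderiv i (pderiv j f) = pderiv j (pderiv i f) := by
  induction f using MvPolynomial.induction_on' with
  | add p q hp hq => simp [hp, hq]
  | monomial s a =>
    by_cases h : i = j
    · subst h; rfl
    · simp only [pderiv_monomial]
      rw [Finsupp.tsub_apply, Finsupp.tsub_apply, Finsupp.single_apply,
        Finsupp.single_apply, if_neg h, if_neg (Ne.symm h)]
      rw [tsub_right_comm]
      simp only [Nat.sub_zero]
      ring_nf

lemma euler3 {k : Type*} [CommSemiring k] (d : ℕ) (f : MvPolynomial (Fin 3) k)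
    (hf : f.IsHomogeneous d) :
    X 0 * pderiv 0 f + X 1 * pderiv 1 f + X 2 * pderiv 2 f = C (d : k) * f := by
  rw [show f = ∑ s ∈ f.support, monomial s (coeff s f) from (f.support_sum_monomial_coeff).symm]
  simp only [map_sum, Finset.mul_sum, ← Finset.sum_add_distrib]
  refine Finset.sum_congr rfl fun s hs => ?_
  rw [_root_.X_mul_pderiv_monomial, _root_.X_mul_pderiv_monomial, _root_.X_mul_pderiv_monomial, C_mul_monomial]
  have hdeg : (s 0 + s 1 + s 2 : ℕ) = d := by
    have := hf (MvPolynomial.mem_support_iff.mp hs)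
    rw [show (1 : Fin 3 → ℕ) = fun _ => 1 from rfl, ← Finsupp.degree_eq_weight_one] at this
    rw [← this, Finsupp.degree_apply,
      Finset.sum_subset (Finset.subset_univ _)
        (fun i _ hi => Finsupp.notMem_support_iff.mp hi), Fin.sum_univ_three]
  rw [← map_add, ← map_add, ← mul_add, ← mul_add, ← Nat.cast_add, ← Nat.cast_add,
    hdeg, mul_comm]

theorem stmt18 {k : Type*} [Field k] [CharZero k] (d : ℕ)
    (f : MvPolynomial (Fin 3) k) (hf : f.IsHomogeneous d) :
    C ((d : k) - 1) *
        (dX f * (dZ f * dY (dY (dY f) * dZ (dZ f) - dZ (dY f) ^ 2)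
            - dY f * dZ (dY (dY f) * dZ (dZ f) - dZ (dY f) ^ 2))
          + dY f * (dZ f * dY (dZ (dX f) * dZ (dY f) - dY (dX f) * dZ (dZ f))
            - dY f * dZ (dZ (dX f) * dZ (dY f) - dY (dX f) * dZ (dZ f)))
          + dZ f * (dZ f * dY (dY (dX f) * dZ (dY f) - dZ (dX f) * dY (dY f))
            - dY f * dZ (dY (dX f) * dZ (dY f) - dZ (dX f) * dY (dY f))))
      = X 0 *
          (dZ f * pderiv 1
              (Matrix.det (Matrix.of fun i j : Fin 3 => pderiv i (pderiv j f)))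
            - dY f * pderiv 2
              (Matrix.det (Matrix.of fun i j : Fin 3 => pderiv i (pderiv j f)))) := by
  have c10 : ∀ g : MvPolynomial (Fin 3) k, pderiv 1 (pderiv 0 g) = pderiv 0 (pderiv 1 g) :=
    fun g => my_pderiv_comm 1 0 g
  have c20 : ∀ g : MvPolynomial (Fin 3) k, pderiv 2 (pderiv 0 g) = pderiv 0 (pderiv 2 g) :=
    fun g => my_pderiv_comm 2 0 g
  have c21 : ∀ g : MvPolynomial (Fin 3) k, pderiv 2 (pderiv 1 g) = pderiv 1 (pderiv 2 g) :=
    fun g => my_pderiv_comm 2 1 g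
  have px : ∀ i j : Fin 3, j ≠ i → pderiv i (X j : MvPolynomial (Fin 3) k) = 0 :=
    fun i j h => pderiv_X_of_ne h
  have px01 := px 1 0 (by decide); have px02 := px 2 0 (by decide)
  have px10 := px 0 1 (by decide); have px12 := px 2 1 (by decide)
  have px20 := px 0 2 (by decide); have px21 := px 1 2 (by decide)
  have hdC : ∀ i : Fin 3, pderiv i ((d : ℕ) : MvPolynomial (Fin 3) k) = 0 := by
    intro i
    rw [← map_natCast (C : k →+* MvPolynomial (Fin 3) k) d]
    exact pderiv_C
  have he := euler3 d f hf
  have h0 := congrArg (pderiv (0 : Fin 3)) he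
  have h1 := congrArg (pderiv (1 : Fin 3)) he
  have h2 := congrArg (pderiv (2 : Fin 3)) he
  simp only [map_add, map_sub, map_one, map_natCast, pderiv_mul, pderiv_X_self,
    px01, px02, px10, px12, px20, px21, pderiv_C_mul, hdC, zero_mul, mul_zero, add_zero, zero_add,
    mul_one, one_mul, c10, c20, c21] at h0 h1 h2
  have key : X 0 * (Matrix.of fun i j : Fin 3 => pderiv i (pderiv j f)).det
      = C ((d : k) - 1) *
        (pderiv 0 f * (pderiv 1 (pderiv 1 f) * pderiv 2 (pderiv 2 f) - pderiv 1 (pderiv 2 f) ^ 2)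
          + pderiv 1 f * (pderiv 0 (pderiv 2 f) * pderiv 1 (pderiv 2 f)
              - pderiv 0 (pderiv 1 f) * pderiv 2 (pderiv 2 f))
          + pderiv 2 f * (pderiv 0 (pderiv 1 f) * pderiv 1 (pderiv 2 f)
              - pderiv 0 (pderiv 2 f) * pderiv 1 (pderiv 1 f))) := by
    rw [Matrix.det_fin_three]
    simp only [Matrix.of_apply, map_sub, map_one, map_natCast, c10, c20, c21]
    linear_combination
      (pderiv 1 (pderiv 1 f) * pderiv 2 (pderiv 2 f) - pderiv 1 (pderiv 2 f) ^ 2) * h0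
      + (pderiv 0 (pderiv 2 f) * pderiv 1 (pderiv 2 f)
          - pderiv 0 (pderiv 1 f) * pderiv 2 (pderiv 2 f)) * h1
      + (pderiv 0 (pderiv 1 f) * pderiv 1 (pderiv 2 f)
          - pderiv 0 (pderiv 2 f) * pderiv 1 (pderiv 1 f)) * h2
  have k1 := congrArg (pderiv (1 : Fin 3)) key
  have k2 := congrArg (pderiv (2 : Fin 3)) key
  simp only [map_add, map_sub, map_one, map_natCast, pderiv_one, pderiv_mul, pderiv_pow, pderiv_X_self,
    px01, px02, px10, px12, px20, px21, pderiv_C_mul, hdC, zero_mul, mul_zero, add_zero, zero_add,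
    mul_one, one_mul, Nat.cast_ofNat, c10, c20, c21] at k1 k2
  simp only [dX, dY, dZ, map_add, map_sub, map_one, map_natCast, pderiv_one, pderiv_mul, pderiv_pow,
    Nat.cast_ofNat, c10, c20, c21]
  linear_combination (pderiv 1 f) * k2 - (pderiv 2 f) * k1
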